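/- arXiv:1302.2018 — 2 statements merged into one kernel-verified Lean document; each statement's English description precedes it below -/
import Mathlib

section
/- Let λ ∈ [0,1/2] and let β be a real number with 0 ≤ β < 1, and set c = (1 − β)/(2(1+λ)). Then the harmonic mappings F₊(z) = z + β·conj(z) + c·z² and F₋(z) = z − β·conj(z) − c·z² both belong to the class HS_1(λ), and for every r ∈ (0,1) one has |F₊(r)| = (1 + β)r + c·r² and |F₋(r)| = (1 − β)r − c·r²; that is, the distortion bounds for HS_p(λ) with λ ∈ [0,1/2] are sharp. -/
open Complex Metric Set

/-- The polyharmonic mapping associated to coefficients `a b : ℕ → ℕ → ℂ`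
(`a n k` is the coefficient `a_{n,k}`):
`F(z) = Σ_{k=1}^p |z|^{2(k-1)} Σ_{n=1}^∞ (a_{n,k} z^n + conj(b_{n,k}) conj(z)^n)`. -/
noncomputable def polyF (p : ℕ) (a b : ℕ → ℕ → ℂ) (z : ℂ) : ℂ :=
  ∑ k ∈ Finset.Icc 1 p, ((‖z‖ : ℝ) : ℂ) ^ (2 * (k - 1)) *
    ∑' n : ℕ, if 1 ≤ n then
      a n k * z ^ n + (starRingEnd ℂ) (b n k) * ((starRingEnd ℂ) z) ^ n else 0

/-- The coefficient conditions defining the class `HS_p(λ)`. -/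
def HSLam (p : ℕ) (lam : ℝ) (a b : ℕ → ℕ → ℂ) : Prop :=
  a 1 1 = 1 ∧
  (∀ k ∈ Finset.Icc 1 p,
    Summable (fun n : ℕ => ‖a n k‖ + ‖b n k‖)) ∧
  (∀ k ∈ Finset.Icc 1 p, Summable (fun n : ℕ =>
    if 2 ≤ n then (2 * ((k : ℝ) - 1) + n * (lam * n + 1 - lam)) *
      (‖a n k‖ + ‖b n k‖) else 0)) ∧
  (∑ k ∈ Finset.Icc 1 p, ∑' n : ℕ,
      (if 2 ≤ n then (2 * ((k : ℝ) - 1) + n * (lam * n + 1 - lam)) *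
        (‖a n k‖ + ‖b n k‖) else 0))
    ≤ 2 - ∑ k ∈ Finset.Icc 1 p,
        (2 * (k : ℝ) - 1) * (‖a 1 k‖ + ‖b 1 k‖) ∧
  1 ≤ ∑ k ∈ Finset.Icc 1 p,
        (2 * (k : ℝ) - 1) * (‖a 1 k‖ + ‖b 1 k‖) ∧
  ∑ k ∈ Finset.Icc 1 p,
        (2 * (k : ℝ) - 1) * (‖a 1 k‖ + ‖b 1 k‖) < 2


/-- Coefficients of the extremal mapping `F₊(z) = z + β conj(z) + c z²`. -/
noncomputable def aPlus (c : ℝ) : ℕ → ℕ → ℂ := fun n k =>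
  if n = 1 ∧ k = 1 then 1 else if n = 2 ∧ k = 1 then (c : ℂ) else 0

noncomputable def bPlus (β : ℝ) : ℕ → ℕ → ℂ := fun n k =>
  if n = 1 ∧ k = 1 then (β : ℂ) else 0

/-- Coefficients of the extremal mapping `F₋(z) = z − β conj(z) − c z²`. -/
noncomputable def aMinus (c : ℝ) : ℕ → ℕ → ℂ := fun n k =>
  if n = 1 ∧ k = 1 then 1 else if n = 2 ∧ k = 1 then (-c : ℂ) else 0

noncomputable def bMinus (β : ℝ) : ℕ → ℕ → ℂ := fun n k =>
  if n = 1 ∧ k = 1 then (-β : ℂ) else 0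

/-- Auxiliary: membership in `HS_1(λ)` for coefficients whose absolute values agree
with those of `aPlus c`, `bPlus β`. -/
lemma hs_aux (lam β c : ℝ) (hlam0 : 0 ≤ lam)
    (hβ0 : 0 ≤ β) (hβ1 : β < 1) (hc : c = (1 - β) / (2 * (1 + lam)))
    (a b : ℕ → ℕ → ℂ) (ha11 : a 1 1 = 1)
    (habs : ∀ n k, ‖a n k‖ = ‖aPlus c n k‖)
    (hbabs : ∀ n k, ‖b n k‖ = ‖bPlus β n k‖) :
    HSLam 1 lam a b := by
  have hpos : (0 : ℝ) < 2 * (1 + lam) := by linarith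
  have hc0 : 0 ≤ c := by
    rw [hc]; apply div_nonneg (by linarith) hpos.le
  have habs1 : ‖a 1 1‖ = 1 := by
    simp [habs, aPlus]
  have hbabs1 : ‖b 1 1‖ = β := by
    simp [hbabs, bPlus, _root_.abs_of_nonneg hβ0]
  have htsum : (∑' n : ℕ, (if 2 ≤ n then (2 * (((1 : ℕ) : ℝ) - 1) + n * (lam * n + 1 - lam)) *
        (‖a n 1‖ + ‖b n 1‖) else 0)) = (2 * lam + 2) * c := by
    rw [tsum_eq_sum (s := {2})]
    · rw [Finset.sum_singleton, if_pos (le_refl 2), habs, hbabs]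
      have e1 : aPlus c 2 1 = (c : ℂ) := by norm_num [aPlus]
      have e2 : bPlus β 2 1 = 0 := by norm_num [bPlus]
      rw [e1, e2, norm_zero, Complex.norm_real, Real.norm_eq_abs, _root_.abs_of_nonneg hc0]
      push_cast
      ring
    · intro n hn
      simp only [Finset.mem_singleton] at hn
      by_cases h2 : 2 ≤ n
      · have h1 : n ≠ 1 := by omega
        simp [habs, hbabs, aPlus, bPlus, h2, hn, h1]
      · simp [h2]
  have hmain : (2 * lam + 2) * c = 1 - β := by
    rw [hc]; field_simp; ring
  refine ⟨ha11, ?_, ?_, ?_, ?_, ?_⟩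
  · intro k hk
    simp only [Finset.mem_Icc] at hk
    have hk1 : k = 1 := by omega
    subst hk1
    apply summable_of_ne_finset_zero (s := ({1, 2} : Finset ℕ))
    intro n hn
    simp only [Finset.mem_insert, Finset.mem_singleton, not_or] at hn
    simp [habs, hbabs, aPlus, bPlus, hn.1, hn.2]
  · intro k hk
    simp only [Finset.mem_Icc] at hk
    have hk1 : k = 1 := by omega
    subst hk1
    apply summable_of_ne_finset_zero (s := ({2} : Finset ℕ))
    intro n hn
    simp only [Finset.mem_singleton] at hn
    by_cases h2 : 2 ≤ n
    · have h1 : n ≠ 1 := by omega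
      simp [habs, hbabs, aPlus, bPlus, h2, hn, h1]
    · simp [h2]
  · simp only [Finset.Icc_self, Finset.sum_singleton]
    rw [htsum, habs1, hbabs1, hmain]
    push_cast
    linarith
  · simp only [Finset.Icc_self, Finset.sum_singleton, habs1, hbabs1]
    push_cast
    nlinarith
  · simp only [Finset.Icc_self, Finset.sum_singleton, habs1, hbabs1]
    push_cast
    nlinarith

lemma polyF_aux (a b : ℕ → ℕ → ℂ) (a1 a2 bv : ℂ)
    (h1 : a 1 1 = a1) (h2 : a 2 1 = a2) (hb1 : b 1 1 = bv)
    (ha : ∀ n, n ≠ 1 → n ≠ 2 → a n 1 = 0) (hb : ∀ n, n ≠ 1 → b n 1 = 0) (z : ℂ) :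
    polyF 1 a b z = a1 * z + (starRingEnd ℂ) bv * (starRingEnd ℂ) z + a2 * z ^ 2 := by
  unfold polyF
  simp only [Finset.Icc_self, Finset.sum_singleton]
  rw [tsum_eq_sum (s := ({1, 2} : Finset ℕ))]
  · simp [h1, h2, hb1, hb 2 (by norm_num)]
    try ring
  · intro n hn
    simp only [Finset.mem_insert, Finset.mem_singleton, not_or] at hn
    by_cases hn1 : 1 ≤ n
    · simp [ha n hn.1 hn.2, hb n hn.1, hn1]
    · simp [hn1]

/-- Sharpness of the distortion bounds for `HS_p(λ)`, `0 ≤ λ ≤ 1/2`: the mappings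
`F₊(z) = z + β conj(z) + c z²` and `F₋(z) = z − β conj(z) − c z²`, where
`c = (1−β)/(2(1+λ))`, belong to `HS_1(λ)` and attain the bounds on `(0,1)`. -/
theorem distortion_bounds_sharp
    (lam β c : ℝ) (hlam : lam ∈ Set.Icc (0 : ℝ) (1 / 2))
    (hβ0 : 0 ≤ β) (hβ1 : β < 1) (hc : c = (1 - β) / (2 * (1 + lam))) :
    HSLam 1 lam (aPlus c) (bPlus β) ∧
    HSLam 1 lam (aMinus c) (bMinus β) ∧
    (∀ z ∈ Metric.ball (0 : ℂ) 1,
      polyF 1 (aPlus c) (bPlus β) z = z + (β : ℂ) * (starRingEnd ℂ) z + (c : ℂ) * z ^ 2 ∧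
      polyF 1 (aMinus c) (bMinus β) z = z - (β : ℂ) * (starRingEnd ℂ) z - (c : ℂ) * z ^ 2) ∧
    (∀ r : ℝ, 0 < r → r < 1 →
      ‖(r : ℂ) + (β : ℂ) * (starRingEnd ℂ) (r : ℂ) + (c : ℂ) * (r : ℂ) ^ 2‖
        = (1 + β) * r + c * r ^ 2 ∧
      ‖(r : ℂ) - (β : ℂ) * (starRingEnd ℂ) (r : ℂ) - (c : ℂ) * (r : ℂ) ^ 2‖
        = (1 - β) * r - c * r ^ 2) := by
  obtain ⟨hlam0, hlam2⟩ := hlam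
  have hpos : (0 : ℝ) < 2 * (1 + lam) := by linarith
  have hc0 : 0 ≤ c := by rw [hc]; apply div_nonneg (by linarith) hpos.le
  refine ⟨?_, ?_, ?_, ?_⟩
  · exact hs_aux lam β c hlam0 hβ0 hβ1 hc _ _ (by simp [aPlus]) (fun n k => rfl)
      (fun n k => rfl)
  · refine hs_aux lam β c hlam0 hβ0 hβ1 hc _ _ (by simp [aMinus]) ?_ ?_
    · intro n k
      unfold aMinus aPlus
      split_ifs <;> simp
    · intro n k
      unfold bMinus bPlus
      split_ifs <;> simp
  · intro z hz
    constructor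
    · rw [polyF_aux (aPlus c) (bPlus β) 1 (c : ℂ) (β : ℂ) (by simp [aPlus]) (by simp [aPlus])
        (by simp [bPlus]) (fun n h1 h2 => by simp [aPlus, h1, h2]) (fun n h1 => by simp [bPlus, h1]) z]
      simp only [map_neg, Complex.conj_ofReal, one_mul]
      try ring
    · rw [polyF_aux (aMinus c) (bMinus β) 1 (-c : ℂ) (-β : ℂ) (by simp [aMinus]) (by simp [aMinus])
        (by simp [bMinus]) (fun n h1 h2 => by simp [aMinus, h1, h2]) (fun n h1 => by simp [bMinus, h1]) z]
      simp only [map_neg, Complex.conj_ofReal, one_mul]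
      try ring
  · intro r hr0 hr1
    have hcr : c * r ≤ 1 - β := by
      have : c ≤ (1 - β) := by
        rw [hc]
        rw [div_le_iff₀ hpos]
        nlinarith
      nlinarith
    constructor
    · rw [Complex.conj_ofReal]
      have : (r : ℂ) + (β : ℂ) * (r : ℂ) + (c : ℂ) * (r : ℂ) ^ 2
          = (((1 + β) * r + c * r ^ 2 : ℝ) : ℂ) := by push_cast; ring
      rw [this, Complex.norm_real, Real.norm_eq_abs, _root_.abs_of_nonneg]
      nlinarith
    · rw [Complex.conj_ofReal]
      have : (r : ℂ) - (β : ℂ) * (r : ℂ) - (c : ℂ) * (r : ℂ) ^ 2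
          = (((1 - β) * r - c * r ^ 2 : ℝ) : ℂ) := by push_cast; ring
      rw [this, Complex.norm_real, Real.norm_eq_abs, _root_.abs_of_nonneg]
      nlinarith
end

section
/- Let p ≥ 2 be an integer, λ ∈ (1/2, 1], and let F be a polyharmonic mapping of class HS_p(λ) with coefficients a_{n,k}, b_{n,k}. Then Σ_{k=1}^p Σ_{n=2}^∞ (|a_{n,k}| + |b_{n,k}|) + Σ_{k=3}^p (|a_{1,k}| + |b_{1,k}|) ≤ (1 − |b_{1,1}| − 3(|a_{1,2}| + |b_{1,2}|))/(2(1+λ)). -/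
open Complex Metric Set

/-- Coefficient bound for `F ∈ HS_p(λ)` with `1/2 < λ ≤ 1` and `p ≥ 2`. -/
theorem coefficient_sum_bound_large_lambda
    (p : ℕ) (hp : 2 ≤ p) (lam : ℝ) (hlam : lam ∈ Set.Ioc (1 / 2 : ℝ) 1)
    (a b : ℕ → ℕ → ℂ) (hF : HSLam p lam a b) :
    ∑ k ∈ Finset.Icc 1 p, ∑' n : ℕ,
        (if 2 ≤ n then ‖a n k‖ + ‖b n k‖ else 0)
      + ∑ k ∈ Finset.Icc 3 p, (‖a 1 k‖ + ‖b 1 k‖)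
      ≤ (1 - ‖b 1 1‖ - 3 * (‖a 1 2‖ + ‖b 1 2‖))
          / (2 * (1 + lam)) := by
  obtain ⟨ha11, hsum, hwsum, hineq, hge1, hlt2⟩ := hF
  obtain ⟨hl1, hl2⟩ := hlam
  set c : ℕ → ℕ → ℝ := fun n k => ‖a n k‖ + ‖b n k‖ with hc
  have hcnn : ∀ n k, 0 ≤ c n k := fun n k =>
    add_nonneg (norm_nonneg _) (norm_nonneg _)
  have hL : (0:ℝ) < 2 * (1 + lam) := by nlinarith
  -- summability of the truncated coefficient sums
  have hg : ∀ k ∈ Finset.Icc 1 p,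
      Summable (fun n : ℕ => if 2 ≤ n then c n k else 0) := by
    intro k hk
    refine Summable.of_nonneg_of_le (fun n => ?_) (fun n => ?_) (hsum k hk)
    · split
      · exact hcnn n k
      · exact le_rfl
    · split
      · exact le_rfl
      · exact hcnn n k
  -- key pointwise bound
  have key : ∀ k ∈ Finset.Icc 1 p, ∀ n : ℕ,
      2 * (1 + lam) * (if 2 ≤ n then c n k else 0) ≤
      (if 2 ≤ n then (2 * ((k : ℝ) - 1) + n * (lam * n + 1 - lam)) * c n k else 0) := by
    intro k hk n
    by_cases hn : 2 ≤ n
    · simp only [hn, if_true]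
      have hk1 : (1:ℝ) ≤ k := by exact_mod_cast (Finset.mem_Icc.mp hk).1
      have hn2 : (2:ℝ) ≤ n := by exact_mod_cast hn
      have hw : 2 * (1 + lam) ≤ 2 * ((k : ℝ) - 1) + n * (lam * n + 1 - lam) := by
        nlinarith [mul_nonneg (sub_nonneg.mpr hn2) (by nlinarith : (0:ℝ) ≤ lam * n + lam + 1)]
      exact mul_le_mul_of_nonneg_right hw (hcnn n k)
    · simp [hn]
  -- tsum bound per k
  have hts : ∀ k ∈ Finset.Icc 1 p,
      2 * (1 + lam) * (∑' n : ℕ, if 2 ≤ n then c n k else 0) ≤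
      ∑' n : ℕ, (if 2 ≤ n then (2 * ((k : ℝ) - 1) + n * (lam * n + 1 - lam)) * c n k else 0) := by
    intro k hk
    rw [← tsum_mul_left]
    exact Summable.tsum_le_tsum (key k hk) ((hg k hk).mul_left _) (hwsum k hk)
  have hS : 2 * (1 + lam) * (∑ k ∈ Finset.Icc 1 p, ∑' n : ℕ, (if 2 ≤ n then c n k else 0)) ≤
      2 - ∑ k ∈ Finset.Icc 1 p, (2 * (k : ℝ) - 1) * c 1 k := by
    rw [Finset.mul_sum]
    exact le_trans (Finset.sum_le_sum hts) hineq
  -- tail bound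
  have hT : 2 * (1 + lam) * (∑ k ∈ Finset.Icc 3 p, c 1 k) ≤
      ∑ k ∈ Finset.Icc 3 p, (2 * (k : ℝ) - 1) * c 1 k := by
    rw [Finset.mul_sum]
    refine Finset.sum_le_sum (fun k hk => ?_)
    have hk3 : (3:ℝ) ≤ k := by exact_mod_cast (Finset.mem_Icc.mp hk).1
    exact mul_le_mul_of_nonneg_right (by nlinarith) (hcnn 1 k)
  -- split the first-coefficient sum
  have hsplit : ∑ k ∈ Finset.Icc 1 p, (2 * (k : ℝ) - 1) * c 1 k =
      c 1 1 + 3 * c 1 2 + ∑ k ∈ Finset.Icc 3 p, (2 * (k : ℝ) - 1) * c 1 k := by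
    have h1 : Finset.Icc 1 p = Finset.Ioc 0 p := by rw [← Finset.Icc_add_one_left_eq_Ioc]; rfl
    have h3 : Finset.Icc 3 p = Finset.Ioc 2 p := by rw [← Finset.Icc_add_one_left_eq_Ioc]; rfl
    rw [h1, h3, ← Finset.sum_Ioc_consecutive _ (Nat.zero_le 2) hp]
    have h02 : Finset.Ioc 0 2 = ({1, 2} : Finset ℕ) := by decide
    rw [h02]
    norm_num
  have hc11 : c 1 1 = 1 + ‖b 1 1‖ := by
    simp [hc, ha11]
  rw [le_div_iff₀ hL]
  have hgoal : ((∑ k ∈ Finset.Icc 1 p, ∑' (n : ℕ), if 2 ≤ n then c n k else 0)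
      + ∑ k ∈ Finset.Icc 3 p, c 1 k) * (2 * (1 + lam))
      ≤ 1 - ‖b 1 1‖ - 3 * c 1 2 := by nlinarith [hS, hT, hsplit, hc11]
  exact hgoal
end
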